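/- If L₁ and L₂ are visibly pushdown languages over a common partition Σ = Σ_c ⊔ Σ_i ⊔ Σ_r, then L₁ ∪ L₂ is a visibly pushdown language over that partition. -/

import Mathlib

inductive VKind | call | internal | response
deriving DecidableEq

/-- A (nondeterministic) visibly pushdown automaton over alphabet `A`
partitioned by `kind` into call, internal and response letters. -/
structure VPA (A : Type) (kind : A → VKind) where
  Q : Type
  Γ : Type
  [finQ : Fintype Q]
  [finΓ : Fintype Γ]
  init : Q
  accept : Set Q
  /-- transitions on call letters: push one symbol, do not inspect the stack -/
  δc : Q → A → Set (Q × Γ)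
  /-- transitions on internal letters: do not inspect or modify the stack -/
  δi : Q → A → Set Q
  /-- transitions on response letters: pop the topmost stack symbol -/
  δr : Q → A → Γ → Set Q
  /-- transitions on response letters read on the empty stack (bottom symbol) -/
  δb : Q → A → Set Q

namespace VPA

variable {A : Type} {kind : A → VKind}

inductive Steps (M : VPA A kind) : M.Q × List M.Γ → List A → M.Q × List M.Γ → Prop
  | nil (c) : Steps M c [] c
  | call {q s a q' γ w c} : kind a = .call → (q', γ) ∈ M.δc q a →
      Steps M (q', γ :: s) w c → Steps M (q, s) (a :: w) c
  | internal {q s a q' w c} : kind a = .internal → q' ∈ M.δi q a →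
      Steps M (q', s) w c → Steps M (q, s) (a :: w) c
  | pop {q γ s a q' w c} : kind a = .response → q' ∈ M.δr q a γ →
      Steps M (q', s) w c → Steps M (q, γ :: s) (a :: w) c
  | popEmpty {q a q' w c} : kind a = .response → q' ∈ M.δb q a →
      Steps M (q', []) w c → Steps M (q, []) (a :: w) c

/-- A VPA accepts a word if reading it from the initial state with empty stack
can end in an accepting state (with arbitrary stack contents). -/
def Accepts (M : VPA A kind) (w : List A) : Prop :=
  ∃ c : M.Q × List M.Γ, M.Steps (M.init, []) w c ∧ c.1 ∈ M.accept

end VPA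

/-- `L` is a visibly pushdown language over the partition `kind`. -/
def IsVPL {A : Type} (kind : A → VKind) (L : Set (List A)) : Prop :=
  ∃ M : VPA A kind, L = {w | M.Accepts w}

namespace VPA

variable {A : Type} {kind : A → VKind}

/-- Disjoint-sum automaton recognizing the union. -/
def usum (M₁ M₂ : VPA A kind) : VPA A kind where
  Q := Option (M₁.Q ⊕ M₂.Q)
  Γ := M₁.Γ ⊕ M₂.Γ
  finQ := by have := M₁.finQ; have := M₂.finQ; infer_instance
  finΓ := by have := M₁.finΓ; have := M₂.finΓ; infer_instance
  init := none
  accept := { q | match q with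
    | none => M₁.init ∈ M₁.accept ∨ M₂.init ∈ M₂.accept
    | some (Sum.inl q) => q ∈ M₁.accept
    | some (Sum.inr q) => q ∈ M₂.accept }
  δc q a := match q with
    | none => (fun p => (some (Sum.inl p.1), Sum.inl p.2)) '' M₁.δc M₁.init a ∪
              (fun p => (some (Sum.inr p.1), Sum.inr p.2)) '' M₂.δc M₂.init a
    | some (Sum.inl q) => (fun p => (some (Sum.inl p.1), Sum.inl p.2)) '' M₁.δc q a
    | some (Sum.inr q) => (fun p => (some (Sum.inr p.1), Sum.inr p.2)) '' M₂.δc q a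
  δi q a := match q with
    | none => (some ∘ Sum.inl) '' M₁.δi M₁.init a ∪ (some ∘ Sum.inr) '' M₂.δi M₂.init a
    | some (Sum.inl q) => (some ∘ Sum.inl) '' M₁.δi q a
    | some (Sum.inr q) => (some ∘ Sum.inr) '' M₂.δi q a
  δr q a γ := match q, γ with
    | some (Sum.inl q), Sum.inl γ => (some ∘ Sum.inl) '' M₁.δr q a γ
    | some (Sum.inr q), Sum.inr γ => (some ∘ Sum.inr) '' M₂.δr q a γ
    | _, _ => ∅
  δb q a := match q with
    | none => (some ∘ Sum.inl) '' M₁.δb M₁.init a ∪ (some ∘ Sum.inr) '' M₂.δb M₂.init a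
    | some (Sum.inl q) => (some ∘ Sum.inl) '' M₁.δb q a
    | some (Sum.inr q) => (some ∘ Sum.inr) '' M₂.δb q a

variable {M₁ M₂ : VPA A kind}

lemma usum_fwd_l' {c w c'} (h : Steps M₁ c w c') :
    Steps (usum M₁ M₂) (some (Sum.inl c.1), c.2.map Sum.inl) w
      (some (Sum.inl c'.1), c'.2.map Sum.inl) := by
  induction h with
  | nil => exact Steps.nil _
  | call ha hm _ ih => exact Steps.call ha ⟨_, hm, rfl⟩ ih
  | internal ha hm _ ih => exact Steps.internal ha ⟨_, hm, rfl⟩ ih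
  | pop ha hm _ ih => exact Steps.pop ha ⟨_, hm, rfl⟩ ih
  | popEmpty ha hm _ ih => exact Steps.popEmpty ha ⟨_, hm, rfl⟩ ih

lemma usum_fwd_l {q s w q' s'} (h : Steps M₁ (q, s) w (q', s')) :
    Steps (usum M₁ M₂) (some (Sum.inl q), s.map Sum.inl) w
      (some (Sum.inl q'), s'.map Sum.inl) := usum_fwd_l' h

lemma usum_fwd_r' {c w c'} (h : Steps M₂ c w c') :
    Steps (usum M₁ M₂) (some (Sum.inr c.1), c.2.map Sum.inr) w
      (some (Sum.inr c'.1), c'.2.map Sum.inr) := by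
  induction h with
  | nil => exact Steps.nil _
  | call ha hm _ ih => exact Steps.call ha ⟨_, hm, rfl⟩ ih
  | internal ha hm _ ih => exact Steps.internal ha ⟨_, hm, rfl⟩ ih
  | pop ha hm _ ih => exact Steps.pop ha ⟨_, hm, rfl⟩ ih
  | popEmpty ha hm _ ih => exact Steps.popEmpty ha ⟨_, hm, rfl⟩ ih

lemma usum_fwd_r {q s w q' s'} (h : Steps M₂ (q, s) w (q', s')) :
    Steps (usum M₁ M₂) (some (Sum.inr q), s.map Sum.inr) w
      (some (Sum.inr q'), s'.map Sum.inr) := usum_fwd_r' h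

lemma usum_bwd_l {c w c'} (h : Steps (usum M₁ M₂) c w c')
    {q : M₁.Q} {s : List M₁.Γ} (hc : c = (some (Sum.inl q), s.map Sum.inl)) :
    ∃ q' s', c' = (some (Sum.inl q'), s'.map Sum.inl) ∧ Steps M₁ (q, s) w (q', s') := by
  induction h generalizing q s with
  | nil => exact ⟨q, s, hc, Steps.nil _⟩
  | call ha hm _ ih =>
      replace hc := Prod.mk.inj hc
      obtain ⟨h1, h2⟩ := hc
      subst h1
      obtain ⟨⟨q₁, γ₁⟩, hm1, heq⟩ := hm
      obtain ⟨hq, hγ⟩ := Prod.mk.injEq .. ▸ heq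
      obtain ⟨q', s', hceq, hst⟩ := ih (q := q₁) (s := γ₁ :: s)
        (by subst hq; subst hγ; subst h2; rfl)
      exact ⟨q', s', hceq, Steps.call ha hm1 hst⟩
  | internal ha hm _ ih =>
      replace hc := Prod.mk.inj hc
      obtain ⟨h1, h2⟩ := hc
      subst h1
      obtain ⟨q₁, hm1, hq⟩ := hm
      obtain ⟨q', s', hceq, hst⟩ := ih (q := q₁) (s := s)
        (by subst hq; subst h2; rfl)
      exact ⟨q', s', hceq, Steps.internal ha hm1 hst⟩
  | pop ha hm _ ih =>
      replace hc := Prod.mk.inj hc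
      obtain ⟨h1, h2⟩ := hc
      subst h1
      cases s with
      | nil => simp at h2
      | cons γ₀ s₀ =>
        replace h2 := List.cons.inj h2
        obtain ⟨hγ, hs⟩ := h2
        subst hγ; subst hs
        obtain ⟨q₁, hm1, hq⟩ := hm
        obtain ⟨q', s', hceq, hst⟩ := ih (q := q₁) (s := s₀)
          (by subst hq; rfl)
        exact ⟨q', s', hceq, Steps.pop ha hm1 hst⟩
  | popEmpty ha hm _ ih =>
      replace hc := Prod.mk.inj hc
      obtain ⟨h1, h2⟩ := hc
      subst h1
      cases s with
      | cons _ _ => simp at h2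
      | nil =>
        obtain ⟨q₁, hm1, hq⟩ := hm
        obtain ⟨q', s', hceq, hst⟩ := ih (q := q₁) (s := [])
          (by subst hq; rfl)
        exact ⟨q', s', hceq, Steps.popEmpty ha hm1 hst⟩

lemma usum_bwd_r {c w c'} (h : Steps (usum M₁ M₂) c w c')
    {q : M₂.Q} {s : List M₂.Γ} (hc : c = (some (Sum.inr q), s.map Sum.inr)) :
    ∃ q' s', c' = (some (Sum.inr q'), s'.map Sum.inr) ∧ Steps M₂ (q, s) w (q', s') := by
  induction h generalizing q s with
  | nil => exact ⟨q, s, hc, Steps.nil _⟩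
  | call ha hm _ ih =>
      replace hc := Prod.mk.inj hc
      obtain ⟨h1, h2⟩ := hc
      subst h1
      obtain ⟨⟨q₁, γ₁⟩, hm1, heq⟩ := hm
      obtain ⟨hq, hγ⟩ := Prod.mk.injEq .. ▸ heq
      obtain ⟨q', s', hceq, hst⟩ := ih (q := q₁) (s := γ₁ :: s)
        (by subst hq; subst hγ; subst h2; rfl)
      exact ⟨q', s', hceq, Steps.call ha hm1 hst⟩
  | internal ha hm _ ih =>
      replace hc := Prod.mk.inj hc
      obtain ⟨h1, h2⟩ := hc
      subst h1
      obtain ⟨q₁, hm1, hq⟩ := hm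
      obtain ⟨q', s', hceq, hst⟩ := ih (q := q₁) (s := s)
        (by subst hq; subst h2; rfl)
      exact ⟨q', s', hceq, Steps.internal ha hm1 hst⟩
  | pop ha hm _ ih =>
      replace hc := Prod.mk.inj hc
      obtain ⟨h1, h2⟩ := hc
      subst h1
      cases s with
      | nil => simp at h2
      | cons γ₀ s₀ =>
        replace h2 := List.cons.inj h2
        obtain ⟨hγ, hs⟩ := h2
        subst hγ; subst hs
        obtain ⟨q₁, hm1, hq⟩ := hm
        obtain ⟨q', s', hceq, hst⟩ := ih (q := q₁) (s := s₀)
          (by subst hq; rfl)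
        exact ⟨q', s', hceq, Steps.pop ha hm1 hst⟩
  | popEmpty ha hm _ ih =>
      replace hc := Prod.mk.inj hc
      obtain ⟨h1, h2⟩ := hc
      subst h1
      cases s with
      | cons _ _ => simp at h2
      | nil =>
        obtain ⟨q₁, hm1, hq⟩ := hm
        obtain ⟨q', s', hceq, hst⟩ := ih (q := q₁) (s := [])
          (by subst hq; rfl)
        exact ⟨q', s', hceq, Steps.popEmpty ha hm1 hst⟩

lemma usum_accepts {w} :
    (usum M₁ M₂).Accepts w ↔ M₁.Accepts w ∨ M₂.Accepts w := by
  constructor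
  · rintro ⟨c, hs, hacc⟩
    cases w with
    | nil =>
      cases hs
      rcases hacc with h | h
      · exact Or.inl ⟨(M₁.init, []), Steps.nil _, h⟩
      · exact Or.inr ⟨(M₂.init, []), Steps.nil _, h⟩
    | cons a w =>
      cases hs with
      | call ha hm hrest =>
        rcases hm with ⟨⟨q₁, γ₁⟩, hm1, heq⟩ | ⟨⟨q₁, γ₁⟩, hm1, heq⟩
        · obtain ⟨hq, hγ⟩ := Prod.mk.injEq .. ▸ heq
          obtain ⟨q', s', hceq, hst⟩ := usum_bwd_l hrest (q := q₁) (s := [γ₁])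
            (by subst hq; subst hγ; rfl)
          refine Or.inl ⟨(q', s'), Steps.call ha hm1 hst, ?_⟩
          rw [hceq] at hacc; exact hacc
        · obtain ⟨hq, hγ⟩ := Prod.mk.injEq .. ▸ heq
          obtain ⟨q', s', hceq, hst⟩ := usum_bwd_r hrest (q := q₁) (s := [γ₁])
            (by subst hq; subst hγ; rfl)
          refine Or.inr ⟨(q', s'), Steps.call ha hm1 hst, ?_⟩
          rw [hceq] at hacc; exact hacc
      | internal ha hm hrest =>
        rcases hm with ⟨q₁, hm1, hq⟩ | ⟨q₁, hm1, hq⟩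
        · obtain ⟨q', s', hceq, hst⟩ := usum_bwd_l hrest (q := q₁) (s := [])
            (by subst hq; rfl)
          refine Or.inl ⟨(q', s'), Steps.internal ha hm1 hst, ?_⟩
          rw [hceq] at hacc; exact hacc
        · obtain ⟨q', s', hceq, hst⟩ := usum_bwd_r hrest (q := q₁) (s := [])
            (by subst hq; rfl)
          refine Or.inr ⟨(q', s'), Steps.internal ha hm1 hst, ?_⟩
          rw [hceq] at hacc; exact hacc
      | popEmpty ha hm hrest =>
        rcases hm with ⟨q₁, hm1, hq⟩ | ⟨q₁, hm1, hq⟩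
        · obtain ⟨q', s', hceq, hst⟩ := usum_bwd_l hrest (q := q₁) (s := [])
            (by subst hq; rfl)
          refine Or.inl ⟨(q', s'), Steps.popEmpty ha hm1 hst, ?_⟩
          rw [hceq] at hacc; exact hacc
        · obtain ⟨q', s', hceq, hst⟩ := usum_bwd_r hrest (q := q₁) (s := [])
            (by subst hq; rfl)
          refine Or.inr ⟨(q', s'), Steps.popEmpty ha hm1 hst, ?_⟩
          rw [hceq] at hacc; exact hacc
  · rintro (⟨⟨q', s'⟩, hs, hacc⟩ | ⟨⟨q', s'⟩, hs, hacc⟩)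
    · cases hs with
      | nil => exact ⟨(none, []), Steps.nil _, Or.inl hacc⟩
      | call ha hm hrest =>
        refine ⟨(some (Sum.inl q'), s'.map Sum.inl),
          Steps.call ha (Or.inl ⟨_, hm, rfl⟩) ?_, hacc⟩
        exact usum_fwd_l hrest
      | internal ha hm hrest =>
        refine ⟨(some (Sum.inl q'), s'.map Sum.inl),
          Steps.internal ha (Or.inl ⟨_, hm, rfl⟩) ?_, hacc⟩
        exact usum_fwd_l hrest
      | popEmpty ha hm hrest =>
        refine ⟨(some (Sum.inl q'), s'.map Sum.inl),
          Steps.popEmpty ha (Or.inl ⟨_, hm, rfl⟩) ?_, hacc⟩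
        exact usum_fwd_l hrest
    · cases hs with
      | nil => exact ⟨(none, []), Steps.nil _, Or.inr hacc⟩
      | call ha hm hrest =>
        refine ⟨(some (Sum.inr q'), s'.map Sum.inr),
          Steps.call ha (Or.inr ⟨_, hm, rfl⟩) ?_, hacc⟩
        exact usum_fwd_r hrest
      | internal ha hm hrest =>
        refine ⟨(some (Sum.inr q'), s'.map Sum.inr),
          Steps.internal ha (Or.inr ⟨_, hm, rfl⟩) ?_, hacc⟩
        exact usum_fwd_r hrest
      | popEmpty ha hm hrest =>
        refine ⟨(some (Sum.inr q'), s'.map Sum.inr),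
          Steps.popEmpty ha (Or.inr ⟨_, hm, rfl⟩) ?_, hacc⟩
        exact usum_fwd_r hrest

end VPA

/-- VPLs over a common partition are closed under union. -/
theorem IsVPL.union {A : Type} (kind : A → VKind) (L₁ L₂ : Set (List A))
    (h₁ : IsVPL kind L₁) (h₂ : IsVPL kind L₂) : IsVPL kind (L₁ ∪ L₂) := by
  obtain ⟨M₁, rfl⟩ := h₁
  obtain ⟨M₂, rfl⟩ := h₂
  refine ⟨VPA.usum M₁ M₂, ?_⟩
  ext w
  simp [Set.mem_union, VPA.usum_accepts, Set.mem_setOf_eq]
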